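/- For τ ∈ (0,1), 0 < ε ≤ (1/2)·min(τ,1-τ), and the capacity-achieving quantile q of the (τ,ε) binary asymmetric channel, |q - 1/2| ≤ 2ε/(τ(1-τ)). -/

import Mathlib

noncomputable def binEntropy (x : ℝ) : ℝ :=
  -(x * Real.logb 2 x) - (1 - x) * Real.logb 2 (1 - x)

/-- The mutual information objective for querying at quantile `q`. -/
noncomputable def mutualInfo (τ ε q : ℝ) : ℝ :=
  binEntropy ((1 - q) * (τ - ε) + q * (τ + ε))
    - (1 - q) * binEntropy (τ - ε) - q * binEntropy (τ + ε)

lemma nh_eq (x : ℝ) :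
    Real.binEntropy x = -(x * Real.log x) - (1 - x) * Real.log (1 - x) := by
  simp [Real.binEntropy, Real.log_inv]; ring

lemma binEntropy_eq_real (x : ℝ) :
    binEntropy x = Real.binEntropy x / Real.log 2 := by
  simp [binEntropy, Real.logb, nh_eq]; ring

/-- Gibbs' inequality / gradient inequality for binary entropy. -/
lemma gibbs_grad (a b : ℝ) (ha0 : 0 < a) (ha1 : a < 1) (hb0 : 0 < b) (hb1 : b < 1) :
    Real.binEntropy b ≤ Real.binEntropy a + (Real.log (1 - a) - Real.log a) * (b - a) := by
  have h1a : (0:ℝ) < 1 - a := by linarith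
  have h1b : (0:ℝ) < 1 - b := by linarith
  have h1 : Real.log a - Real.log b ≤ a / b - 1 := by
    rw [← Real.log_div ha0.ne' hb0.ne']
    exact Real.log_le_sub_one_of_pos (div_pos ha0 hb0)
  have h2 : Real.log (1 - a) - Real.log (1 - b) ≤ (1 - a) / (1 - b) - 1 := by
    rw [← Real.log_div h1a.ne' h1b.ne']
    exact Real.log_le_sub_one_of_pos (div_pos h1a h1b)
  have h1' : b * (Real.log a - Real.log b) ≤ a - b := by
    have := mul_le_mul_of_nonneg_left h1 hb0.le
    have hb : b * (a / b - 1) = a - b := by field_simp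
    linarith [this, hb.le]
  have h2' : (1 - b) * (Real.log (1 - a) - Real.log (1 - b)) ≤ b - a := by
    have := mul_le_mul_of_nonneg_left h2 h1b.le
    have hb : (1 - b) * ((1 - a) / (1 - b) - 1) = b - a := by field_simp; ring
    linarith [this, hb.le]
  rw [nh_eq, nh_eq]
  nlinarith [h1', h2']

/-- Key inequality: slope `(H(τ+ε)-H(τ-ε))/(2ε)` is strictly greater than `H'(τ+s)`
for `s = 4ε²/(τ(1-τ))`. -/
lemma keyA (τ ε s : ℝ) (hτ0 : 0 < τ) (hτ1 : τ < 1) (hε0 : 0 < ε)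
    (hετ : ε ≤ τ / 2) (hε1τ : ε ≤ (1 - τ) / 2)
    (hs4 : s = 4 * ε ^ 2 / (τ * (1 - τ))) (hsε : s < ε) :
    2 * ε * (Real.log (1 - (τ + s)) - Real.log (τ + s)) <
      Real.binEntropy (τ + ε) - Real.binEntropy (τ - ε) := by
  have hab : 0 < τ * (1 - τ) := mul_pos hτ0 (by linarith)
  have hs0 : 0 < s := by rw [hs4]; positivity
  have hsab : s * (τ * (1 - τ)) = 4 * ε ^ 2 := by rw [hs4]; field_simp; exact div_self (sub_ne_zero.mpr hτ1.ne')
  have heq4 : ε ≤ 1/4 := by linarith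
  have hτs0 : 0 < τ + s := by linarith
  have hτs1 : 0 < 1 - (τ + s) := by linarith
  set c := Real.log (1 - (τ + s)) - Real.log (τ + s) with hc
  set G : ℝ → ℝ := fun u => Real.binEntropy (τ + u) - Real.binEntropy (τ - u) - 2 * u * c
    with hGdef
  have hmono : StrictMonoOn G (Set.Icc 0 ε) := by
    apply strictMonoOn_of_deriv_pos (convex_Icc 0 ε)
    · apply Continuous.continuousOn
      apply Continuous.sub
      apply Continuous.sub
      · exact Real.binEntropy_continuous.comp (continuous_const.add continuous_id)
      · exact Real.binEntropy_continuous.comp (continuous_const.sub continuous_id)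
      · fun_prop
    · rw [interior_Icc]
      intro u hu
      obtain ⟨hu0, huε⟩ := hu
      have hp1 : 0 < τ + u := by linarith
      have hp2 : 0 < 1 - (τ + u) := by linarith
      have hp3 : 0 < τ - u := by linarith
      have hp4 : 0 < 1 - (τ - u) := by linarith
      have dc : HasDerivAt (fun v : ℝ => τ + v) 1 u := (hasDerivAt_id u).const_add τ
      have dmc : HasDerivAt (fun v : ℝ => τ - v) (-1) u := (hasDerivAt_id u).const_sub τ
      have d1 : HasDerivAt (fun v : ℝ => Real.binEntropy (τ + v))
          ((Real.log (1 - (τ + u)) - Real.log (τ + u)) * 1) u :=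
        (Real.hasDerivAt_binEntropy hp1.ne' (by linarith)).comp u dc
      have d2 : HasDerivAt (fun v : ℝ => Real.binEntropy (τ - v))
          ((Real.log (1 - (τ - u)) - Real.log (τ - u)) * (-1)) u :=
        (Real.hasDerivAt_binEntropy hp3.ne' (by linarith)).comp u dmc
      have d3 : HasDerivAt (fun v : ℝ => 2 * v * c) (2 * c) u := by
        simpa using ((hasDerivAt_id u).const_mul 2).mul_const c
      have dG : HasDerivAt G
          ((Real.log (1 - (τ + u)) - Real.log (τ + u)) * 1 -
            (Real.log (1 - (τ - u)) - Real.log (τ - u)) * (-1) - 2 * c) u :=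
        (d1.sub d2).sub d3
      rw [dG.deriv]
      -- key polynomial inequality
      have key : (1 - (τ + s)) ^ 2 * ((τ + u) * (τ - u)) <
          (1 - (τ + u)) * ((1 - (τ - u)) * (τ + s) ^ 2) := by
        nlinarith [hsab, sq_nonneg s, sq_nonneg u, mul_pos hs0 (mul_pos hε0 hε0),
          mul_pos hs0 hab, sq_nonneg (ε - u), mul_pos hε0 hε0]
      have hposR : 0 < (1 - (τ + s)) ^ 2 * ((τ + u) * (τ - u)) := by positivity
      have hlog := Real.log_lt_log hposR key
      have e1 : Real.log ((1 - (τ + s)) ^ 2 * ((τ + u) * (τ - u))) =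
          2 * Real.log (1 - (τ + s)) + Real.log (τ + u) + Real.log (τ - u) := by
        rw [Real.log_mul (by positivity) (by positivity),
          Real.log_mul (by positivity) (by positivity), Real.log_pow]
        push_cast; ring
      have e2 : Real.log ((1 - (τ + u)) * ((1 - (τ - u)) * (τ + s) ^ 2)) =
          Real.log (1 - (τ + u)) + Real.log (1 - (τ - u)) + 2 * Real.log (τ + s) := by
        rw [Real.log_mul (by positivity) (by positivity),
          Real.log_mul (by positivity) (by positivity), Real.log_pow]
        push_cast; ring
      rw [e1, e2] at hlog
      linarith [hlog]
  have h0mem : (0:ℝ) ∈ Set.Icc (0:ℝ) ε := by constructor <;> linarith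
  have hεmem : ε ∈ Set.Icc (0:ℝ) ε := by constructor <;> linarith
  have := hmono h0mem hεmem hε0
  have hG0 : G 0 = 0 := by simp [hGdef]
  have hGε : G ε = Real.binEntropy (τ + ε) - Real.binEntropy (τ - ε) - 2 * ε * c := rfl
  rw [hG0, hGε] at this
  linarith

theorem capacity_achieving_quantile_near_half (τ ε q : ℝ)
    (hτ0 : 0 < τ) (hτ1 : τ < 1) (hε0 : 0 < ε) (hε : ε ≤ (1/2) * min τ (1 - τ))
    (hq : q ∈ Set.Icc (0 : ℝ) 1)
    (hmax : ∀ x ∈ Set.Icc (0 : ℝ) 1, mutualInfo τ ε x ≤ mutualInfo τ ε q) :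
    |q - 1/2| ≤ 2 * ε / (τ * (1 - τ)) := by
  have hτ1' : (0:ℝ) < 1 - τ := by linarith
  have hab : 0 < τ * (1 - τ) := mul_pos hτ0 hτ1'
  have hετ : ε ≤ τ / 2 := by
    have := min_le_left τ (1 - τ); linarith
  have hε1τ : ε ≤ (1 - τ) / 2 := by
    have := min_le_right τ (1 - τ); linarith
  obtain ⟨hq0, hq1⟩ := hq
  set δ := 2 * ε / (τ * (1 - τ)) with hδdef
  have hδ0 : 0 < δ := by positivity
  rcases le_or_gt (1/2 : ℝ) δ with hbig | hsmall
  · rw [abs_le]; constructor <;> linarith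
  · -- nontrivial case
    set s := 4 * ε ^ 2 / (τ * (1 - τ)) with hsdef
    have hs0 : 0 < s := by positivity
    have hsδ : s = 2 * δ * ε := by rw [hδdef, hsdef]; ring
    have hsε : s < ε := by
      rw [hsδ]; nlinarith [hε0, hsmall, hδ0]
    have hL : (0:ℝ) < Real.log 2 := Real.log_pos one_lt_two
    have hmi : ∀ x : ℝ, mutualInfo τ ε x =
        (Real.binEntropy (τ + (2 * x - 1) * ε) - (1 - x) * Real.binEntropy (τ - ε)
          - x * Real.binEntropy (τ + ε)) / Real.log 2 := by
      intro x
      unfold mutualInfo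
      rw [binEntropy_eq_real, binEntropy_eq_real, binEntropy_eq_real,
        show (1 - x) * (τ - ε) + x * (τ + ε) = τ + (2 * x - 1) * ε by ring]
      ring
    -- position of m q
    have hmq0 : 0 < τ + (2 * q - 1) * ε := by nlinarith
    have hmq1 : τ + (2 * q - 1) * ε < 1 := by nlinarith
    have hτs0 : 0 < τ + s := by linarith
    have hτs1 : τ + s < 1 := by linarith
    have hτms0 : 0 < τ - s := by linarith
    have hτms1 : τ - s < 1 := by linarith
    have hA := keyA τ ε s hτ0 hτ1 hε0 hετ hε1τ hsdef hsε
    have hB := keyA (1 - τ) ε s (by linarith) (by linarith) hε0 (by linarith)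
      (by linarith) (by rw [hsdef]; ring_nf) hsε
    rw [show (1:ℝ) - τ + ε = 1 - (τ - ε) by ring, show (1:ℝ) - τ - ε = 1 - (τ + ε) by ring,
      Real.binEntropy_one_sub, Real.binEntropy_one_sub,
      show (1:ℝ) - (1 - τ + s) = τ - s by ring,
      show (1:ℝ) - τ + s = 1 - (τ - s) by ring] at hB
    -- hB : 2ε (log (τ - s) - log (1 - (τ - s))) < nh (τ-ε) - nh (τ+ε)
    rw [abs_le]
    constructor
    · -- q ≥ 1/2 - δ
      by_contra hcon
      push_neg at hcon
      have hx1mem : (1/2 - δ) ∈ Set.Icc (0:ℝ) 1 := by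
        constructor <;> [linarith; linarith]
      have hMI := hmax (1/2 - δ) hx1mem
      rw [hmi q, hmi (1/2 - δ), div_le_div_iff_of_pos_right hL] at hMI
      rw [show τ + (2 * (1/2 - δ) - 1) * ε = τ - s by rw [hsδ]; ring] at hMI
      have hg := gibbs_grad (τ - s) (τ + (2 * q - 1) * ε) hτms0 hτms1 hmq0 hmq1
      rw [show (1:ℝ) - (τ - s) = 1 - (τ - s) from rfl] at hg
      have hqx : q - (1/2 - δ) < 0 := by linarith
      have hprod := mul_lt_mul_of_pos_right hB (by linarith : (0:ℝ) < (1/2 - δ) - q)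
      have hm : τ + (2 * q - 1) * ε - (τ - s) = 2 * ε * (q - (1/2 - δ)) := by
        rw [hsδ]; ring
      rw [hm] at hg
      linarith [hMI, hg, hprod]
    · -- q ≤ 1/2 + δ
      by_contra hcon
      push_neg at hcon
      have hx0mem : (1/2 + δ) ∈ Set.Icc (0:ℝ) 1 := by
        constructor <;> [linarith; linarith]
      have hMI := hmax (1/2 + δ) hx0mem
      rw [hmi q, hmi (1/2 + δ), div_le_div_iff_of_pos_right hL] at hMI
      rw [show τ + (2 * (1/2 + δ) - 1) * ε = τ + s by rw [hsδ]; ring] at hMI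
      have hg := gibbs_grad (τ + s) (τ + (2 * q - 1) * ε) hτs0 hτs1 hmq0 hmq1
      have hprod := mul_lt_mul_of_pos_right hA (by linarith : (0:ℝ) < q - (1/2 + δ))
      have hm : τ + (2 * q - 1) * ε - (τ + s) = 2 * ε * (q - (1/2 + δ)) := by
        rw [hsδ]; ring
      rw [hm] at hg
      linarith [hMI, hg, hprod]
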